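/- Let X be a proper metric space, ρ : C₀(X) → B(H) a nondegenerate representation, and U1, U2 closed subsets of X that coarsely cover X. Let P_i denote the orthogonal projection of H onto H_{U_i} for i = 1, 2, and let P_{12} denote the orthogonal projection of H onto H_{U1 ∩ U2}. Suppose T1, T2 ∈ B(H) are locally compact operators of finite propagation with respect to ρ satisfying T_i = P_i T_i P_i for i = 1, 2, and suppose T1 + T2 is a compact operator. Then there exists an operator T_{12} ∈ B(H), locally compact and of finite propagation with respect to ρ and satisfying T_{12} = P_{12} T_{12} P_{12}, such that T_{12} − T1 and T_{12} + T2 are compact operators. -/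

import Mathlib

open scoped ZeroAtInfty
open ContinuousLinearMap

/-- For a representation `ρ : C₀(X) → B(H)` and a subset `Y ⊆ X`, the subspace `H_{I(Y)}`:
the closure of the linear span of `{ρ(f)v : f ∈ I(Y), v ∈ H}`, where
`I(Y) = {f ∈ C₀(X) : f(y) = 0 for all y ∈ Y}`. -/
noncomputable def HI {X H : Type*} [MetricSpace X]
    [NormedAddCommGroup H] [InnerProductSpace ℂ H] [CompleteSpace H]
    (ρ : C₀(X, ℂ) →⋆ₙₐ[ℂ] (H →L[ℂ] H)) (Y : Set X) : Submodule ℂ H :=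
  (Submodule.span ℂ
    {w : H | ∃ f : C₀(X, ℂ), (∀ y ∈ Y, f y = 0) ∧ ∃ v : H, w = ρ f v}).topologicalClosure

instance {X H : Type*} [MetricSpace X]
    [NormedAddCommGroup H] [InnerProductSpace ℂ H] [CompleteSpace H]
    (ρ : C₀(X, ℂ) →⋆ₙₐ[ℂ] (H →L[ℂ] H)) (Y : Set X) :
    Submodule.HasOrthogonalProjection (HI ρ Y)ᗮ := by
  haveI : CompleteSpace (HI ρ Y) :=
    (Submodule.isClosed_topologicalClosure _).completeSpace_coe
  infer_instance

/-- The orthogonal projection `P_Y` of `H` onto `H_Y = H_{I(Y)}ᗮ`, viewed as an operator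
`H → H`. -/
noncomputable def projHY {X H : Type*} [MetricSpace X]
    [NormedAddCommGroup H] [InnerProductSpace ℂ H] [CompleteSpace H]
    (ρ : C₀(X, ℂ) →⋆ₙₐ[ℂ] (H →L[ℂ] H)) (Y : Set X) : H →L[ℂ] H :=
  ((HI ρ Y)ᗮ).subtypeL ∘L Submodule.orthogonalProjectionOnto (HI ρ Y)ᗮ

/-- A representation `ρ : C₀(X) → B(H)` is nondegenerate if the closed linear span of
`{ρ(f)v : f ∈ C₀(X), v ∈ H}` equals `H`. -/
def Nondegenerate {X H : Type*} [MetricSpace X]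
    [NormedAddCommGroup H] [InnerProductSpace ℂ H] [CompleteSpace H]
    (ρ : C₀(X, ℂ) →⋆ₙₐ[ℂ] (H →L[ℂ] H)) : Prop :=
  (Submodule.span ℂ {w : H | ∃ f : C₀(X, ℂ), ∃ v : H, w = ρ f v}).topologicalClosure = ⊤

/-- An operator `T ∈ B(H)` is locally compact with respect to `ρ` if `ρ(f)T` and `Tρ(f)` are
compact operators for every `f ∈ C₀(X)`. -/
def LocallyCompactOp {X H : Type*} [MetricSpace X]
    [NormedAddCommGroup H] [InnerProductSpace ℂ H] [CompleteSpace H]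
    (ρ : C₀(X, ℂ) →⋆ₙₐ[ℂ] (H →L[ℂ] H)) (T : H →L[ℂ] H) : Prop :=
  ∀ f : C₀(X, ℂ), IsCompactOperator ⇑(ρ f ∘L T) ∧ IsCompactOperator ⇑(T ∘L ρ f)

/-- An operator `T ∈ B(H)` has finite propagation with respect to `ρ` if there exists
`R > 0` such that `ρ(f) T ρ(g) = 0` for all `f, g ∈ C₀(X)` with `d(x, y) > R` for every
`x ∈ supp f` and `y ∈ supp g`. -/
def FinitePropagation {X H : Type*} [MetricSpace X]
    [NormedAddCommGroup H] [InnerProductSpace ℂ H] [CompleteSpace H]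
    (ρ : C₀(X, ℂ) →⋆ₙₐ[ℂ] (H →L[ℂ] H)) (T : H →L[ℂ] H) : Prop :=
  ∃ R > (0 : ℝ), ∀ f g : C₀(X, ℂ),
    (∀ x ∈ Function.support ⇑f, ∀ y ∈ Function.support ⇑g, R < dist x y) →
    ρ f ∘L T ∘L ρ g = 0

/-- Subsets `U1, U2` coarsely cover `X` if for every `R > 0` the set
`{x ∈ X : d(x, X∖U1) ≤ R and d(x, X∖U2) ≤ R}` is metrically bounded. -/
def CoarselyCoversAll {X : Type*} [MetricSpace X] (U1 U2 : Set X) : Prop :=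
  ∀ R > (0 : ℝ), Bornology.IsBounded
    {x : X | (∃ y ∈ U1ᶜ, dist x y ≤ R) ∧ (∃ y ∈ U2ᶜ, dist x y ≤ R)}

section MainAux
open Metric

variable {X H : Type*} [MetricSpace X]
    [NormedAddCommGroup H] [InnerProductSpace ℂ H] [CompleteSpace H]
    (ρ : C₀(X, ℂ) →⋆ₙₐ[ℂ] (H →L[ℂ] H)) (Y : Set X)

local notation "⟪" x ", " y "⟫" => @inner ℂ _ _ x y

lemma HI_le_of_closed (p : Submodule ℂ H) (hp : IsClosed (p : Set H))
    (hgen : ∀ f : C₀(X, ℂ), (∀ y ∈ Y, f y = 0) → ∀ v : H, ρ f v ∈ p) :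
    HI ρ Y ≤ p := by
  refine Submodule.topologicalClosure_minimal _ (Submodule.span_le.2 ?_) hp
  rintro w ⟨f, hf, v, rfl⟩
  exact hgen f hf v

lemma mem_orthogonal_HI_iff (v : H) :
    v ∈ (HI ρ Y)ᗮ ↔ ∀ f : C₀(X, ℂ), (∀ y ∈ Y, f y = 0) → ρ f v = 0 := by
  constructor
  · intro hv f hf
    have hmem : ρ (star f) (ρ f v) ∈ HI ρ Y := by
      refine (Submodule.le_topologicalClosure _) (Submodule.subset_span ?_)
      exact ⟨star f, fun y hy => by simp [hf y hy], ρ f v, rfl⟩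
    have h0 : ⟪ρ (star f) (ρ f v), v⟫ = 0 := (Submodule.mem_orthogonal _ v).1 hv _ hmem
    have hadj : ρ (star f) = ContinuousLinearMap.adjoint (ρ f) := by
      rw [map_star, ContinuousLinearMap.star_eq_adjoint]
    rw [hadj, ContinuousLinearMap.adjoint_inner_left] at h0
    exact inner_self_eq_zero.1 h0
  · intro hv
    rw [Submodule.mem_orthogonal]
    intro u hu
    have : u ∈ LinearMap.ker (innerSL ℂ v : H →ₗ[ℂ] ℂ) := by
      refine HI_le_of_closed ρ Y _ ?_ ?_ hu
      · exact ContinuousLinearMap.isClosed_ker (innerSL ℂ v)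
      · intro f hf w
        have : ⟪ρ f w, v⟫ = 0 := by
          have hadj : ρ f = ContinuousLinearMap.adjoint (ρ (star f)) := by
            rw [map_star, ContinuousLinearMap.star_eq_adjoint,
              ContinuousLinearMap.adjoint_adjoint]
          rw [hadj, ContinuousLinearMap.adjoint_inner_left,
            hv (star f) (fun y hy => by simp [hf y hy])]
          simp
        simpa [LinearMap.mem_ker] using inner_eq_zero_symm.1 this
    simpa [LinearMap.mem_ker] using inner_eq_zero_symm.1 (by simpa using this)

lemma projHY_mem (v : H) : projHY ρ Y v ∈ (HI ρ Y)ᗮ :=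
  (Submodule.orthogonalProjectionOnto (HI ρ Y)ᗮ v).2

lemma projHY_eq_self {v : H} (hv : v ∈ (HI ρ Y)ᗮ) : projHY ρ Y v = v :=
  Submodule.starProjection_eq_self_iff.2 hv

lemma projHY_eq_zero {v : H} (hv : v ∈ HI ρ Y) : projHY ρ Y v = 0 := by
  have : Submodule.orthogonalProjectionOnto (HI ρ Y)ᗮ v = 0 :=
    Submodule.orthogonalProjectionOnto_apply_of_mem_orthogonal
      (Submodule.le_orthogonal_orthogonal _ hv)
  simp [projHY, this]

lemma mem_HI_of_gen (f : C₀(X, ℂ)) (hf : ∀ y ∈ Y, f y = 0) (v : H) : ρ f v ∈ HI ρ Y :=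
  (Submodule.le_topologicalClosure _) (Submodule.subset_span ⟨f, hf, v, rfl⟩)

lemma projHY_comp_eq_zero (f : C₀(X, ℂ)) (hf : ∀ y ∈ Y, f y = 0) (v : H) :
    projHY ρ Y (ρ f v) = 0 :=
  projHY_eq_zero ρ Y (mem_HI_of_gen ρ Y f hf v)

lemma ρ_maps_HI {f : C₀(X, ℂ)} {v : H} (hv : v ∈ HI ρ Y) : ρ f v ∈ HI ρ Y := by
  revert hv
  have hle := HI_le_of_closed ρ Y
      (Submodule.comap ((ρ f : H →L[ℂ] H) : H →ₗ[ℂ] H) (HI ρ Y))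
      ((Submodule.isClosed_topologicalClosure _).preimage (ρ f).continuous) ?_
  · exact fun hv => hle hv
  · intro g hg w
    have hm : ρ f (ρ g w) = ρ (f * g) w := by rw [map_mul]; rfl
    refine Submodule.mem_comap.2 ?_
    show ρ f (ρ g w) ∈ HI ρ Y
    rw [hm]
    exact mem_HI_of_gen ρ Y (f * g) (fun y hy => by simp [hg y hy]) w

lemma sub_projHY_mem (v : H) : v - projHY ρ Y v ∈ HI ρ Y := by
  haveI : CompleteSpace (HI ρ Y) :=
    (Submodule.isClosed_topologicalClosure _).completeSpace_coe
  have h := Submodule.sub_starProjection_mem_orthogonal (K := (HI ρ Y)ᗮ) v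
  rwa [Submodule.orthogonal_orthogonal] at h

lemma projHY_comm (f : C₀(X, ℂ)) (v : H) :
    projHY ρ Y (ρ f v) = ρ f (projHY ρ Y v) := by
  have h1 : ρ f (projHY ρ Y v) ∈ (HI ρ Y)ᗮ := by
    rw [mem_orthogonal_HI_iff]
    intro g hg
    have hm : ρ g (ρ f (projHY ρ Y v)) = ρ (g * f) (projHY ρ Y v) := by rw [map_mul]; rfl
    rw [hm]
    exact (mem_orthogonal_HI_iff ρ Y _).1 (projHY_mem ρ Y v) (g * f)
      (fun y hy => by simp [hg y hy])
  have h2 : ρ f (v - projHY ρ Y v) ∈ HI ρ Y := ρ_maps_HI ρ Y (sub_projHY_mem ρ Y v)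
  have hsplit : ρ f v = ρ f (projHY ρ Y v) + ρ f (v - projHY ρ Y v) := by
    rw [← map_add]; congr 1; abel
  rw [hsplit, map_add, projHY_eq_self ρ Y h1, projHY_eq_zero ρ Y h2, add_zero]

lemma C0_decomp {U1 U2 : Set X}
    (hU1 : IsClosed U1) (hU2 : IsClosed U2) (hn1 : U1.Nonempty) (hn2 : U2.Nonempty)
    (f : C₀(X, ℂ)) (hf : ∀ x ∈ U1 ∩ U2, f x = 0) :
    ∃ f1 f2 : C₀(X, ℂ), f = f1 + f2 ∧ (∀ x ∈ U1, f1 x = 0) ∧ (∀ x ∈ U2, f2 x = 0) := by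
  set θ : X → ℝ := fun x => infDist x U1 / (infDist x U1 + infDist x U2) with hθ
  have hθ01 : ∀ x, θ x ∈ Set.Icc (0:ℝ) 1 := by
    intro x
    by_cases h : infDist x U1 + infDist x U2 = 0
    · have h1 : infDist x U1 = 0 := by
        have := infDist_nonneg (x := x) (s := U1); have := infDist_nonneg (x := x) (s := U2)
        linarith
      simp [hθ, h1]
    · constructor
      · have h1 := infDist_nonneg (x := x) (s := U1)
        have h2 := infDist_nonneg (x := x) (s := U2)
        exact div_nonneg h1 (by linarith)
      · have h1 := infDist_nonneg (x := x) (s := U1)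
        have h2 := infDist_nonneg (x := x) (s := U2)
        rw [div_le_one (lt_of_le_of_ne (by linarith) (Ne.symm h))]
        linarith
  have hbound : ∀ x, ‖f x * (θ x : ℂ)‖ ≤ ‖f x‖ := by
    intro x
    rw [norm_mul]
    have : ‖(θ x : ℂ)‖ ≤ 1 := by
      rw [Complex.norm_real, Real.norm_eq_abs, abs_le]
      exact ⟨by linarith [(hθ01 x).1], (hθ01 x).2⟩
    calc ‖f x‖ * ‖(θ x : ℂ)‖ ≤ ‖f x‖ * 1 :=
          mul_le_mul_of_nonneg_left this (norm_nonneg _)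
      _ = ‖f x‖ := mul_one _
  have hcont : Continuous fun x => f x * (θ x : ℂ) := by
    rw [continuous_iff_continuousAt]
    intro x
    by_cases hx : x ∈ U1 ∩ U2
    · have hfx : f x = 0 := hf x hx
      have ht : Filter.Tendsto (fun y => f y * (θ y : ℂ)) (nhds x) (nhds 0) := by
        apply squeeze_zero_norm hbound
        have h : Filter.Tendsto (fun y => ‖f y‖) (nhds x) (nhds ‖f x‖) :=
          ((map_continuous f).continuousAt (x := x)).norm
        rwa [hfx, norm_zero] at h
      simpa [ContinuousAt, hfx]
    · have hpos : 0 < infDist x U1 + infDist x U2 := by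
        rcases not_and_or.1 hx with hx1 | hx2
        · have := (hU1.notMem_iff_infDist_pos hn1).1 hx1
          have := infDist_nonneg (x := x) (s := U2); linarith
        · have := (hU2.notMem_iff_infDist_pos hn2).1 hx2
          have := infDist_nonneg (x := x) (s := U1); linarith
      have hθc : ContinuousAt θ x := by
        apply ContinuousAt.div
        · exact (continuous_infDist_pt U1).continuousAt
        · exact ((continuous_infDist_pt U1).add (continuous_infDist_pt U2)).continuousAt
        · exact ne_of_gt hpos
      exact ((map_continuous f).continuousAt).mul
        (Complex.continuous_ofReal.continuousAt.comp hθc)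
  have hzero : Filter.Tendsto (fun x => f x * (θ x : ℂ)) (Filter.cocompact X) (nhds 0) := by
    apply squeeze_zero_norm hbound
    have h := (zero_at_infty f).norm
    simpa using h
  refine ⟨⟨⟨fun x => f x * (θ x : ℂ), hcont⟩, hzero⟩,
    f - ⟨⟨fun x => f x * (θ x : ℂ), hcont⟩, hzero⟩, by abel, ?_, ?_⟩
  · intro x hx
    have h1 : infDist x U1 = 0 := infDist_zero_of_mem hx
    show f x * (θ x : ℂ) = 0
    simp [hθ, h1]
  · intro x hx
    have h2 : infDist x U2 = 0 := infDist_zero_of_mem hx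
    show f x - f x * (θ x : ℂ) = 0
    by_cases hx1 : x ∈ U1
    · rw [hf x ⟨hx1, hx⟩]; ring
    · have h1 : 0 < infDist x U1 := (hU1.notMem_iff_infDist_pos hn1).1 hx1
      have hθ1 : θ x = 1 := by rw [hθ]; simp [h2]; simp [h1.ne']
      rw [hθ1]; push_cast; ring

end MainAux

/-- Let `X` be a proper metric space, `ρ : C₀(X) → B(H)` a nondegenerate
representation, and `U1, U2` closed subsets of `X` that coarsely cover `X`. Let `P_i` denote
the orthogonal projection of `H` onto `H_{U_i}` for `i = 1, 2`, and let `P_{12}` denote the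
orthogonal projection of `H` onto `H_{U1 ∩ U2}`. Suppose `T1, T2 ∈ B(H)` are locally compact
operators of finite propagation with respect to `ρ` satisfying `T_i = P_i T_i P_i` for
`i = 1, 2`, and suppose `T1 + T2` is a compact operator. Then there exists an operator
`T_{12} ∈ B(H)`, locally compact and of finite propagation with respect to `ρ` and satisfying
`T_{12} = P_{12} T_{12} P_{12}`, such that `T_{12} − T1` and `T_{12} + T2` are compact
operators. -/
theorem difference_supported_on_intersection
    (X : Type*) [MetricSpace X] [ProperSpace X]
    (H : Type*) [NormedAddCommGroup H] [InnerProductSpace ℂ H] [CompleteSpace H]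
    (ρ : C₀(X, ℂ) →⋆ₙₐ[ℂ] (H →L[ℂ] H)) (hρ : Nondegenerate ρ)
    (U1 U2 : Set X) (hU1 : IsClosed U1) (hU2 : IsClosed U2)
    (hcover : CoarselyCoversAll U1 U2)
    (T1 T2 : H →L[ℂ] H)
    (hlc1 : LocallyCompactOp ρ T1) (hfp1 : FinitePropagation ρ T1)
    (hP1 : T1 = projHY ρ U1 ∘L T1 ∘L projHY ρ U1)
    (hlc2 : LocallyCompactOp ρ T2) (hfp2 : FinitePropagation ρ T2)
    (hP2 : T2 = projHY ρ U2 ∘L T2 ∘L projHY ρ U2)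
    (hsum : IsCompactOperator ⇑(T1 + T2)) :
    ∃ T12 : H →L[ℂ] H,
      LocallyCompactOp ρ T12 ∧ FinitePropagation ρ T12 ∧
      T12 = projHY ρ (U1 ∩ U2) ∘L T12 ∘L projHY ρ (U1 ∩ U2) ∧
      IsCompactOperator ⇑(T12 - T1) ∧ IsCompactOperator ⇑(T12 + T2) := by
    classical
  rcases U1.eq_empty_or_nonempty with hU1e | hn1
  · -- `U1 = ∅`: nondegeneracy forces `P1 = 0`, hence `T1 = 0`; take `T12 = 0`.
    have hset : {w : H | ∃ f : C₀(X, ℂ), (∀ y ∈ (∅ : Set X), f y = 0) ∧ ∃ v : H, w = ρ f v}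
        = {w : H | ∃ f : C₀(X, ℂ), ∃ v : H, w = ρ f v} := by
      ext w; simp
    have hHItop : HI ρ U1 = ⊤ := by
      rw [hU1e]; unfold HI; rw [hset]; exact hρ
    have hbot : (HI ρ U1)ᗮ = ⊥ := by rw [hHItop, Submodule.top_orthogonal_eq_bot]
    have hP0 : projHY ρ U1 = 0 := by
      ext v
      have hmem := projHY_mem ρ U1 v
      rw [hbot] at hmem
      simpa using hmem
    have hT1 : T1 = 0 := by rw [hP1, hP0]; ext v; simp
    refine ⟨0, ?_, ⟨1, one_pos, fun f g _ => by ext v; simp⟩, by ext v; simp, ?_, ?_⟩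
    · intro f
      constructor <;> simpa using isCompactOperator_zero
    · rw [hT1]
      simpa using isCompactOperator_zero
    · rw [hT1] at hsum
      simpa using hsum
  rcases U2.eq_empty_or_nonempty with hU2e | hn2
  · -- `U2 = ∅`: similarly `T2 = 0`; take `T12 = 0`.
    have hset : {w : H | ∃ f : C₀(X, ℂ), (∀ y ∈ (∅ : Set X), f y = 0) ∧ ∃ v : H, w = ρ f v}
        = {w : H | ∃ f : C₀(X, ℂ), ∃ v : H, w = ρ f v} := by
      ext w; simp
    have hHItop : HI ρ U2 = ⊤ := by
      rw [hU2e]; unfold HI; rw [hset]; exact hρ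
    have hbot : (HI ρ U2)ᗮ = ⊥ := by rw [hHItop, Submodule.top_orthogonal_eq_bot]
    have hP0 : projHY ρ U2 = 0 := by
      ext v
      have hmem := projHY_mem ρ U2 v
      rw [hbot] at hmem
      simpa using hmem
    have hT2 : T2 = 0 := by rw [hP2, hP0]; ext v; simp
    rw [hT2, add_zero] at hsum
    refine ⟨0, ?_, ⟨1, one_pos, fun f g _ => by ext v; simp⟩, by ext v; simp, ?_, ?_⟩
    · intro f
      constructor <;> simpa using isCompactOperator_zero
    · have : (0 : H →L[ℂ] H) - T1 = -T1 := by abel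
      rw [this]
      simpa [ContinuousLinearMap.coe_neg'] using hsum.neg
    · rw [hT2]
      simpa using isCompactOperator_zero
  -- Main case: both `U1` and `U2` nonempty.  Take `T12 = P2 ∘ T1 ∘ P2`.
  set P1 := projHY ρ U1 with hP1def
  set P2 := projHY ρ U2 with hP2def
  set P12 := projHY ρ (U1 ∩ U2) with hP12def
  have hcomm2 : ∀ (h : C₀(X, ℂ)) (w : H), P2 (ρ h w) = ρ h (P2 w) := fun h w =>
    projHY_comm ρ U2 h w
  have hint : ∀ v : H, v ∈ (HI ρ U1)ᗮ → v ∈ (HI ρ U2)ᗮ → v ∈ (HI ρ (U1 ∩ U2))ᗮ := by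
    intro v h1 h2
    rw [mem_orthogonal_HI_iff]
    intro f hf
    obtain ⟨f1, f2, heq, hf1, hf2⟩ := C0_decomp hU1 hU2 hn1 hn2 f hf
    rw [heq, map_add, ContinuousLinearMap.add_apply,
      (mem_orthogonal_HI_iff ρ U1 v).1 h1 f1 hf1,
      (mem_orthogonal_HI_iff ρ U2 v).1 h2 f2 hf2, add_zero]
  have hT1left : ∀ (g : C₀(X, ℂ)), (∀ y ∈ U1, g y = 0) → ∀ u : H, ρ g (T1 u) = 0 := by
    intro g hg u
    conv_lhs => rw [hP1]
    simp only [ContinuousLinearMap.comp_apply]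
    exact (mem_orthogonal_HI_iff ρ U1 _).1 (projHY_mem ρ U1 _) g hg
  have hT1right : ∀ (g : C₀(X, ℂ)), (∀ y ∈ U1, g y = 0) → ∀ u : H, T1 (ρ g u) = 0 := by
    intro g hg u
    conv_lhs => rw [hP1]
    simp only [ContinuousLinearMap.comp_apply]
    rw [projHY_comp_eq_zero ρ U1 g hg u, map_zero, map_zero]
  refine ⟨P2 ∘L T1 ∘L P2, ?_, ?_, ?_, ?_, ?_⟩
  · -- locally compact
    intro f
    constructor
    · have heq : ρ f ∘L (P2 ∘L T1 ∘L P2) = P2 ∘L ((ρ f ∘L T1) ∘L P2) := by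
        ext v
        simp only [ContinuousLinearMap.comp_apply]
        rw [← hcomm2 f (T1 (P2 v))]
      rw [heq]
      exact ((hlc1 f).1.comp_clm P2).clm_comp P2
    · have heq : (P2 ∘L T1 ∘L P2) ∘L ρ f = P2 ∘L ((T1 ∘L ρ f) ∘L P2) := by
        ext v
        simp only [ContinuousLinearMap.comp_apply]
        rw [hcomm2 f v]
      rw [heq]
      exact ((hlc1 f).2.comp_clm P2).clm_comp P2
  · -- finite propagation
    obtain ⟨R, hRpos, hR⟩ := hfp1
    refine ⟨R, hRpos, fun f g hfg => ?_⟩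
    have h0 := hR f g hfg
    ext v
    simp only [ContinuousLinearMap.comp_apply, ContinuousLinearMap.zero_apply]
    rw [hcomm2 g v, ← hcomm2 f (T1 (ρ g (P2 v)))]
    have hz : ρ f (T1 (ρ g (P2 v))) = 0 := by
      have := ContinuousLinearMap.ext_iff.1 h0 (P2 v)
      simpa [ContinuousLinearMap.comp_apply] using this
    rw [hz, map_zero]
  · -- supported on the intersection
    have hTmem : ∀ w : H, (P2 ∘L T1 ∘L P2) w ∈ (HI ρ (U1 ∩ U2))ᗮ := by
      intro w
      refine hint _ ?_ ?_
      · rw [mem_orthogonal_HI_iff]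
        intro g hg
        simp only [ContinuousLinearMap.comp_apply]
        rw [← hcomm2 g (T1 (P2 w)), hT1left g hg (P2 w), map_zero]
      · simp only [ContinuousLinearMap.comp_apply]
        exact projHY_mem ρ U2 _
    have hkill : ∀ w ∈ HI ρ (U1 ∩ U2), (P2 ∘L T1 ∘L P2) w = 0 := by
      intro w hw
      refine HI_le_of_closed ρ (U1 ∩ U2) (LinearMap.ker ((P2 ∘L T1 ∘L P2 : H →L[ℂ] H) : H →ₗ[ℂ] H)) ?_ ?_ hw
      · exact ContinuousLinearMap.isClosed_ker _
      · intro f hf v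
        obtain ⟨f1, f2, heq, hf1, hf2⟩ := C0_decomp hU1 hU2 hn1 hn2 f hf
        have hv1 : (P2 ∘L T1 ∘L P2) (ρ f1 v) = 0 := by
          simp only [ContinuousLinearMap.comp_apply]
          rw [hcomm2 f1 v, hT1right f1 hf1 (P2 v), map_zero]
        have hv2 : (P2 ∘L T1 ∘L P2) (ρ f2 v) = 0 := by
          simp only [ContinuousLinearMap.comp_apply]
          rw [projHY_comp_eq_zero ρ U2 f2 hf2 v, map_zero, map_zero]
        have : ρ f v = ρ f1 v + ρ f2 v := by
          rw [heq, map_add, ContinuousLinearMap.add_apply]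
        rw [LinearMap.mem_ker]
        show (P2 ∘L T1 ∘L P2) (ρ f v) = 0
        rw [this, map_add, hv1, hv2, add_zero]
    ext v
    simp only [ContinuousLinearMap.comp_apply]
    have h1 : (P2 ∘L T1 ∘L P2) (P12 v) = (P2 ∘L T1 ∘L P2) v := by
      have hz : (P2 ∘L T1 ∘L P2) (v - P12 v) = 0 :=
        hkill _ (sub_projHY_mem ρ (U1 ∩ U2) v)
      have := map_sub (P2 ∘L T1 ∘L P2) v (P12 v)
      rw [hz] at this
      have := sub_eq_zero.1 this.symm
      exact this.symm
    have h2 : P12 ((P2 ∘L T1 ∘L P2) (P12 v)) = (P2 ∘L T1 ∘L P2) (P12 v) :=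
      projHY_eq_self ρ (U1 ∩ U2) (hTmem (P12 v))
    simp only [ContinuousLinearMap.comp_apply] at h1 h2
    rw [h2, h1]
  · -- `T12 - T1` is compact
    have hKop : (P2 ∘L T1 ∘L P2) - T1 = (P2 ∘L ((T1 + T2) ∘L P2)) - (T1 + T2) := by
      have hsplit : P2 ∘L ((T1 + T2) ∘L P2) = (P2 ∘L T1 ∘L P2) + T2 := by
        rw [ContinuousLinearMap.add_comp, ContinuousLinearMap.comp_add, ← hP2]
      rw [hsplit]; abel
    rw [hKop]
    have hc2 : IsCompactOperator ⇑(P2 ∘L ((T1 + T2) ∘L P2)) :=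
      (hsum.comp_clm P2).clm_comp P2
    simpa [ContinuousLinearMap.coe_sub'] using hc2.sub hsum
  · -- `T12 + T2` is compact
    have hsplit : (P2 ∘L T1 ∘L P2) + T2 = P2 ∘L ((T1 + T2) ∘L P2) := by
      rw [ContinuousLinearMap.add_comp, ContinuousLinearMap.comp_add, ← hP2]
    rw [hsplit]
    exact (hsum.comp_clm P2).clm_comp P2
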